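/- arXiv:1306.5899 — 2 statements merged into one kernel-verified Lean document; each statement's English description precedes it below -/
import Mathlib

section
/- Let u ≥ 2 be a real number, m ∈ ℝ, and G ~ N(0,1). Then there is a constant D depending only on u such that Var(|G + m|^u) ≤ D · (1 + |m|^{2u−2}). -/
open MeasureTheory ProbabilityTheory Real Set


lemma aux_int_abs_rpow_exp {s : ℝ} (hs : 0 ≤ s) :
    Integrable (fun x : ℝ => |x| ^ s * Real.exp (-(1/2) * x ^ 2)) := by
  have hb : (0:ℝ) < 1/2 := by norm_num
  have hs' : (-1:ℝ) < s := by linarith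
  have h1 : IntegrableOn (fun x : ℝ => |x| ^ s * Real.exp (-(1/2) * x ^ 2)) (Ioi 0) :=
    (integrableOn_rpow_mul_exp_neg_mul_sq hb hs').congr_fun
      (fun x hx => by rw [abs_of_pos hx]) measurableSet_Ioi
  have h2 : IntegrableOn (fun x : ℝ => |x| ^ s * Real.exp (-(1/2) * x ^ 2)) (Iio 0) := by
    rw [← (Measure.measurePreserving_neg (volume : Measure ℝ)).integrableOn_comp_preimage
        (Homeomorph.neg ℝ).measurableEmbedding]
    simpa [Function.comp_def] using h1
  rw [← integrableOn_univ, ← @Iio_union_Ici _ _ (0 : ℝ), integrableOn_union,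
    integrableOn_Ici_iff_integrableOn_Ioi]
  exact ⟨h2, h1⟩

lemma aux_int_gauss {s : ℝ} (hs : 0 ≤ s) :
    Integrable (fun x : ℝ => |x| ^ s) (gaussianReal 0 1) := by
  rw [gaussianReal_of_var_ne_zero 0 one_ne_zero,
    integrable_withDensity_iff (measurable_gaussianPDF 0 1)
      (ae_of_all _ fun x => ENNReal.ofReal_lt_top)]
  have hpdf : ∀ x : ℝ, (gaussianPDF 0 1 x).toReal = gaussianPDFReal 0 1 x := fun x =>
    ENNReal.toReal_ofReal (gaussianPDFReal_nonneg 0 1 x)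
  simp_rw [hpdf, gaussianPDFReal]
  have := (aux_int_abs_rpow_exp hs).const_mul ((Real.sqrt (2 * Real.pi))⁻¹)
  refine this.congr (ae_of_all _ fun x => ?_)
  simp only [NNReal.coe_one, mul_one, sub_zero]
  ring_nf

-- (a+b)^p ≤ 2^p (a^p + b^p)
lemma aux_rpow_add_le {a b p : ℝ} (ha : 0 ≤ a) (hb : 0 ≤ b) (hp : 0 ≤ p) :
    (a + b) ^ p ≤ 2 ^ p * (a ^ p + b ^ p) := by
  have h1 : a + b ≤ 2 * max a b := by
    rcases max_cases a b with ⟨h, h'⟩ | ⟨h, h'⟩ <;> rw [h] <;> linarith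
  have h2 : (a + b) ^ p ≤ (2 * max a b) ^ p :=
    Real.rpow_le_rpow (by linarith) h1 hp
  have h3 : (2 * max a b) ^ p = 2 ^ p * max a b ^ p :=
    Real.mul_rpow (by norm_num) (le_max_of_le_left ha)
  have h4 : max a b ^ p ≤ a ^ p + b ^ p := by
    rcases max_cases a b with ⟨h, _⟩ | ⟨h, _⟩ <;> rw [h]
    · exact le_add_of_nonneg_right (Real.rpow_nonneg hb p)
    · exact le_add_of_nonneg_left (Real.rpow_nonneg ha p)
  calc (a + b) ^ p ≤ 2 ^ p * max a b ^ p := by rwa [h3] at h2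
    _ ≤ 2 ^ p * (a ^ p + b ^ p) := by
        have : (0:ℝ) ≤ 2 ^ p := Real.rpow_nonneg (by norm_num) p
        nlinarith

-- a^u - b^u ≤ u a^{u-1} (a-b) for 0 ≤ b ≤ a, 1 ≤ u
lemma aux_rpow_sub_le {a b u : ℝ} (hb : 0 ≤ b) (hba : b ≤ a) (hu : 1 ≤ u) :
    a ^ u - b ^ u ≤ u * a ^ (u - 1) * (a - b) := by
  rcases eq_or_lt_of_le (hb.trans hba) with h | ha
  · have hb0 : b = 0 := le_antisymm (hba.trans_eq h.symm) hb
    simp [← h, hb0]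
  · have key := one_add_mul_self_le_rpow_one_add
      (show (-1:ℝ) ≤ b / a - 1 by
        have : 0 ≤ b / a := div_nonneg hb ha.le
        linarith) hu
    rw [show (1:ℝ) + (b / a - 1) = b / a by ring] at key
    -- key : 1 + u * (b/a - 1) ≤ (b/a)^u
    have hdiv : (b / a) ^ u = b ^ u / a ^ u := Real.div_rpow hb ha.le u
    rw [hdiv] at key
    have hapos : 0 < a ^ u := Real.rpow_pos_of_pos ha u
    have hc : a ^ u * (b ^ u / a ^ u) = b ^ u := by field_simp
    have key2 : a ^ u * (1 + u * (b / a - 1)) ≤ b ^ u :=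
      (mul_le_mul_of_nonneg_left key hapos.le).trans_eq hc
    have ham : a ^ (u - 1) * a = a ^ u := by
      rw [← Real.rpow_add_one ha.ne' (u - 1)]; ring_nf
    have : a ^ u * (u * (1 - b / a)) = u * a ^ (u - 1) * (a - b) := by
      rw [← ham]
      field_simp
    nlinarith

-- |A^u - B^u| ≤ u (A+B)^{u-1} |A - B| for A,B ≥ 0
lemma aux_abs_rpow_sub {A B u : ℝ} (hA : 0 ≤ A) (hB : 0 ≤ B) (hu : 1 ≤ u) :
    |A ^ u - B ^ u| ≤ u * (A + B) ^ (u - 1) * |A - B| := by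
  have hu0 : (0:ℝ) ≤ u - 1 := by linarith
  wlog hBA : B ≤ A generalizing A B
  · have := this hB hA (le_of_not_ge hBA)
    rw [abs_sub_comm (B ^ u), abs_sub_comm B] at this
    rwa [add_comm B] at this
  have h1 : B ^ u ≤ A ^ u := Real.rpow_le_rpow hB hBA (by linarith)
  rw [abs_of_nonneg (by linarith), abs_of_nonneg (by linarith)]
  calc A ^ u - B ^ u ≤ u * A ^ (u - 1) * (A - B) := aux_rpow_sub_le hB hBA hu
    _ ≤ u * (A + B) ^ (u - 1) * (A - B) := by
        have h2 : A ^ (u - 1) ≤ (A + B) ^ (u - 1) :=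
          Real.rpow_le_rpow hA (by linarith) hu0
        have h3 : (0:ℝ) ≤ A - B := by linarith
        exact mul_le_mul_of_nonneg_right
          (mul_le_mul_of_nonneg_left h2 (by linarith : (0:ℝ) ≤ u)) h3

-- variance ≤ second moment about any point
lemma aux_var_le {Ω : Type*} [MeasurableSpace Ω] {μ : Measure Ω} [IsProbabilityMeasure μ]
    {X : Ω → ℝ} (hX : MemLp X 2 μ) (c : ℝ) :
    variance X μ ≤ ∫ ω, (X ω - c) ^ 2 ∂μ := by
  have hXi : Integrable X μ := hX.integrable one_le_two
  have hX2 : Integrable (fun ω => X ω ^ 2) μ := (memLp_two_iff_integrable_sq hX.1).mp hX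
  rw [variance_eq_sub hX]
  have expand : ∫ ω, (X ω - c) ^ 2 ∂μ
      = ∫ ω, X ω ^ 2 ∂μ - 2 * c * ∫ ω, X ω ∂μ + c ^ 2 := by
    have h1 : Integrable (fun ω => X ω ^ 2 - 2 * c * X ω) μ := hX2.sub (hXi.const_mul _)
    calc ∫ ω, (X ω - c) ^ 2 ∂μ
        = ∫ ω, (X ω ^ 2 - 2 * c * X ω) + c ^ 2 ∂μ := by
          congr 1; ext ω; ring
      _ = ∫ ω, X ω ^ 2 - 2 * c * X ω ∂μ + ∫ _ω, c ^ 2 ∂μ :=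
          integral_add h1 (integrable_const _)
      _ = (∫ ω, X ω ^ 2 ∂μ - ∫ ω, 2 * c * X ω ∂μ) + c ^ 2 := by
          rw [integral_sub hX2 (hXi.const_mul _)]
          simp
      _ = ∫ ω, X ω ^ 2 ∂μ - 2 * c * ∫ ω, X ω ∂μ + c ^ 2 := by
          rw [integral_const_mul]
  rw [expand]
  have h := sq_nonneg ((∫ ω, X ω ∂μ) - c)
  have hpow : μ[X ^ 2] = ∫ ω, X ω ^ 2 ∂μ := by rfl
  have hm : μ[X] = ∫ ω, X ω ∂μ := rfl
  rw [hpow, hm]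
  nlinarith

lemma aux_int_shift {p m : ℝ} (hp : 0 ≤ p) :
    Integrable (fun g : ℝ => |g + m| ^ p) (gaussianReal 0 1) := by
  have hb : Integrable (fun g : ℝ => 2 ^ p * (|g| ^ p + |m| ^ p)) (gaussianReal 0 1) :=
    ((aux_int_gauss hp).add (integrable_const _)).const_mul _
  refine hb.mono' ?_ (ae_of_all _ fun g => ?_)
  · exact ((continuous_abs.comp (continuous_id.add continuous_const)).rpow_const
      (fun x => Or.inr hp)).aestronglyMeasurable
  · rw [Real.norm_eq_abs, abs_of_nonneg (Real.rpow_nonneg (abs_nonneg _) _)]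
    calc |g + m| ^ p ≤ (|g| + |m|) ^ p :=
          Real.rpow_le_rpow (abs_nonneg _) (abs_add_le _ _) hp
      _ ≤ 2 ^ p * (|g| ^ p + |m| ^ p) := aux_rpow_add_le (abs_nonneg _) (abs_nonneg _) hp


/-- For real `u ≥ 2` there is a constant `D` depending only on `u` such that for every
`m ∈ ℝ` and `G` standard Gaussian, `Var(|G + m|^u) ≤ D (1 + |m|^{2u-2})`. -/
theorem stmt_3 (u : ℝ) (hu : 2 ≤ u) :
    ∃ D : ℝ, 0 < D ∧ ∀ m : ℝ,
      variance (fun g : ℝ => |g + m| ^ u) (gaussianReal 0 1)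
        ≤ D * (1 + |m| ^ (2 * u - 2)) := by
  set ν := gaussianReal 0 1
  set K : ℝ := u ^ 2 * 2 ^ (4 * u - 4) with hK
  have hKpos : 0 < K := by positivity
  set M1 : ℝ := ∫ g, |g| ^ (2 * u) ∂ν with hM1
  set M2 : ℝ := ∫ g, |g| ^ (2 : ℝ) ∂ν with hM2
  have hM1nn : 0 ≤ M1 := integral_nonneg fun g => Real.rpow_nonneg (abs_nonneg _) _
  have hM2nn : 0 ≤ M2 := integral_nonneg fun g => Real.rpow_nonneg (abs_nonneg _) _
  have hInt2u : Integrable (fun g : ℝ => |g| ^ (2 * u)) ν := aux_int_gauss (by linarith)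
  have hIntg2 : Integrable (fun g : ℝ => |g| ^ (2 : ℝ)) ν := aux_int_gauss (by norm_num)
  refine ⟨K * (M1 + M2) + 1, by positivity, fun m => ?_⟩
  set X : ℝ → ℝ := fun g => |g + m| ^ u with hX
  -- Memℒp 2
  have hmeas : AEStronglyMeasurable X ν :=
    ((continuous_abs.comp (continuous_id.add continuous_const)).rpow_const
      (fun x => Or.inr (by linarith))).aestronglyMeasurable
  have hsq : Integrable (fun g : ℝ => X g ^ 2) ν := by
    have heq : (fun g : ℝ => X g ^ 2) = fun g : ℝ => |g + m| ^ (u + u) := by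
      funext g
      rw [hX, sq]
      exact (Real.rpow_add' (abs_nonneg _) (by linarith)).symm
    rw [heq]
    exact aux_int_shift (by linarith)
  have hmem : MemLp X 2 ν := (memLp_two_iff_integrable_sq hmeas).mpr hsq
  -- pointwise bound
  have key : ∀ g : ℝ, (X g - |m| ^ u) ^ 2
      ≤ K * (|g| ^ (2 * u) + |m| ^ (2 * u - 2) * |g| ^ (2 : ℝ)) := by
    intro g
    have hA : (0:ℝ) ≤ |g + m| := abs_nonneg _
    have hB : (0:ℝ) ≤ |m| := abs_nonneg _
    have hg : (0:ℝ) ≤ |g| := abs_nonneg _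
    have h0 := aux_abs_rpow_sub hA hB (by linarith : 1 ≤ u)
    have hAB : abs (|g + m| - |m|) ≤ |g| := by
      simpa using abs_abs_sub_abs_le_abs_sub (g + m) m
    have hcoef : (0:ℝ) ≤ u * (|g + m| + |m|) ^ (u - 1) := by positivity
    have h1 : abs (|g + m| ^ u - |m| ^ u) ≤ u * (|g + m| + |m|) ^ (u - 1) * |g| :=
      h0.trans (mul_le_mul_of_nonneg_left hAB hcoef)
    have h2 : (X g - |m| ^ u) ^ 2 ≤ (u * (|g + m| + |m|) ^ (u - 1) * |g|) ^ 2 := by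
      rw [← sq_abs]
      exact pow_le_pow_left₀ (abs_nonneg _) h1 2
    have hsq1 : ((|g + m| + |m|) ^ (u - 1)) ^ 2 = (|g + m| + |m|) ^ (2 * u - 2) := by
      rw [sq, ← Real.rpow_add' (by positivity) (by intro h; nlinarith)]
      ring_nf
    have h3 : (|g + m| + |m|) ^ (2 * u - 2) ≤ (|g| + 2 * |m|) ^ (2 * u - 2) := by
      refine Real.rpow_le_rpow (by positivity) ?_ (by linarith)
      have := abs_add_le g m
      linarith
    have h4 : (|g| + 2 * |m|) ^ (2 * u - 2)
        ≤ 2 ^ (2 * u - 2) * (|g| ^ (2 * u - 2) + (2 * |m|) ^ (2 * u - 2)) :=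
      aux_rpow_add_le hg (by positivity) (by linarith)
    have h5 : (2 * |m|) ^ (2 * u - 2) = 2 ^ (2 * u - 2) * |m| ^ (2 * u - 2) :=
      Real.mul_rpow (by norm_num) hB
    have h6 : |g| ^ (2 * u - 2) * |g| ^ (2 : ℝ) = |g| ^ (2 * u) := by
      rw [← Real.rpow_add' hg (by intro h; nlinarith)]
      ring_nf
    have h7 : (2:ℝ) ^ (2 * u - 2) * 2 ^ (2 * u - 2) = 2 ^ (4 * u - 4) := by
      rw [← Real.rpow_add (by norm_num : (0:ℝ) < 2)]
      ring_nf
    have h8 : (2:ℝ) ^ (2 * u - 2) ≤ 2 ^ (4 * u - 4) :=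
      Real.rpow_le_rpow_of_exponent_le one_le_two (by linarith)
    have hg2 : |g| ^ (2:ℝ) = |g| ^ (2:ℕ) := Real.rpow_two _
    have e2 : (0:ℝ) ≤ 2 ^ (2 * u - 2) := Real.rpow_nonneg (by norm_num) _
    have eg : (0:ℝ) ≤ |g| ^ (2 * u - 2) := Real.rpow_nonneg hg _
    have em : (0:ℝ) ≤ |m| ^ (2 * u - 2) := Real.rpow_nonneg hB _
    have eg2 : (0:ℝ) ≤ |g| ^ (2:ℝ) := Real.rpow_nonneg hg _
    calc (X g - |m| ^ u) ^ 2
        ≤ (u * (|g + m| + |m|) ^ (u - 1) * |g|) ^ 2 := h2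
      _ = u ^ 2 * ((|g + m| + |m|) ^ (u - 1)) ^ 2 * |g| ^ (2:ℝ) := by
          rw [hg2]; ring
      _ = u ^ 2 * (|g + m| + |m|) ^ (2 * u - 2) * |g| ^ (2:ℝ) := by rw [hsq1]
      _ ≤ u ^ 2 * (|g| + 2 * |m|) ^ (2 * u - 2) * |g| ^ (2:ℝ) := by
          refine mul_le_mul_of_nonneg_right (mul_le_mul_of_nonneg_left h3 (by positivity)) eg2
      _ ≤ u ^ 2 * (2 ^ (2 * u - 2) * (|g| ^ (2 * u - 2) + (2 * |m|) ^ (2 * u - 2))) * |g| ^ (2:ℝ) := by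
          refine mul_le_mul_of_nonneg_right (mul_le_mul_of_nonneg_left h4 (by positivity)) eg2
      _ = u ^ 2 * 2 ^ (2 * u - 2) * (|g| ^ (2 * u - 2) * |g| ^ (2:ℝ))
          + u ^ 2 * (2 ^ (2 * u - 2) * 2 ^ (2 * u - 2)) * (|m| ^ (2 * u - 2) * |g| ^ (2:ℝ)) := by
          rw [h5]; ring
      _ = u ^ 2 * 2 ^ (2 * u - 2) * |g| ^ (2 * u)
          + u ^ 2 * 2 ^ (4 * u - 4) * (|m| ^ (2 * u - 2) * |g| ^ (2:ℝ)) := by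
          rw [h6, h7]
      _ ≤ K * (|g| ^ (2 * u) + |m| ^ (2 * u - 2) * |g| ^ (2 : ℝ)) := by
          rw [hK, mul_add]
          have t1 : u ^ 2 * 2 ^ (2 * u - 2) * |g| ^ (2 * u)
              ≤ u ^ 2 * 2 ^ (4 * u - 4) * |g| ^ (2 * u) := by
            refine mul_le_mul_of_nonneg_right ?_ (Real.rpow_nonneg hg _)
            refine mul_le_mul_of_nonneg_left h8 (by positivity)
          linarith
  -- integral bound
  have hbint : Integrable
      (fun g : ℝ => K * (|g| ^ (2 * u) + |m| ^ (2 * u - 2) * |g| ^ (2 : ℝ))) ν :=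
    (hInt2u.add (hIntg2.const_mul _)).const_mul _
  have step1 : variance X ν ≤ ∫ g, (X g - |m| ^ u) ^ 2 ∂ν := aux_var_le hmem _
  have step2 : ∫ g, (X g - |m| ^ u) ^ 2 ∂ν
      ≤ ∫ g, K * (|g| ^ (2 * u) + |m| ^ (2 * u - 2) * |g| ^ (2 : ℝ)) ∂ν :=
    integral_mono_of_nonneg (ae_of_all _ fun g => sq_nonneg _) hbint (ae_of_all _ key)
  have step3 : ∫ g, K * (|g| ^ (2 * u) + |m| ^ (2 * u - 2) * |g| ^ (2 : ℝ)) ∂ν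
      = K * (M1 + |m| ^ (2 * u - 2) * M2) := by
    rw [integral_const_mul, integral_add hInt2u (hIntg2.const_mul _), integral_const_mul]
  have hmnn : (0:ℝ) ≤ |m| ^ (2 * u - 2) := Real.rpow_nonneg (abs_nonneg _) _
  have final : K * (M1 + |m| ^ (2 * u - 2) * M2)
      ≤ (K * (M1 + M2) + 1) * (1 + |m| ^ (2 * u - 2)) := by
    nlinarith [mul_nonneg hKpos.le hM1nn, mul_nonneg hKpos.le hM2nn,
      mul_nonneg (mul_nonneg hKpos.le hM1nn) hmnn]
  calc variance X ν ≤ ∫ g, (X g - |m| ^ u) ^ 2 ∂ν := step1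
    _ ≤ ∫ g, K * (|g| ^ (2 * u) + |m| ^ (2 * u - 2) * |g| ^ (2 : ℝ)) ∂ν := step2
    _ = K * (M1 + |m| ^ (2 * u - 2) * M2) := step3
    _ ≤ (K * (M1 + M2) + 1) * (1 + |m| ^ (2 * u - 2)) := final
end

section
/- Let (G_{l,k}) for 0 ≤ l ≤ j, k ∈ Z_l with |Z_l| ≤ c·2^l, be independent standard Gaussian random variables, and let (ψ_{l,k}) be a wavelet system satisfying Σ_{l≤j,k} ψ_{l,k}(x)² ≤ C_p² 2^j for all x and ∫|ψ_{l,k}(x)|^p dx ≤ C_p^p 2^{lp(1/2−1/p)}. Then for p ≥ 2, E[ ∫₀¹ |Σ_{l≤j,k} n^{−1/2} G_{l,k} ψ_{l,k}(x)|^p dx ] ≤ D_p^p · 2^{jp/2}/n^{p/2} for a constant D_p depending only on p. -/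
open MeasureTheory ProbabilityTheory
open Real

namespace Stmt13Aux

lemma exp_mul_gaussianPDFReal (s x : ℝ) :
    Real.exp (s * x) * gaussianPDFReal 0 1 x
      = Real.exp (s ^ 2 / 2) * gaussianPDFReal s 1 x := by
  simp only [gaussianPDFReal, NNReal.coe_one, mul_one, sub_zero]
  have h : ∀ a b : ℝ, Real.exp a * ((Real.sqrt (2 * π))⁻¹ * Real.exp b)
      = (Real.sqrt (2 * π))⁻¹ * Real.exp (a + b) := by
    intro a b; rw [Real.exp_add]; ring
  rw [h, h]
  congr 2
  ring

lemma integrable_exp_gaussian (s : ℝ) :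
    Integrable (fun x => Real.exp (s * x)) (gaussianReal 0 1) := by
  rw [gaussianReal_of_var_ne_zero 0 one_ne_zero,
    integrable_withDensity_iff (measurable_gaussianPDF 0 1)
      (ae_of_all _ fun x => ENNReal.ofReal_lt_top)]
  have h : (fun x => Real.exp (s * x) * (gaussianPDF 0 1 x).toReal)
      = fun x => Real.exp (s ^ 2 / 2) * gaussianPDFReal s 1 x := by
    ext x
    rw [gaussianPDF, ENNReal.toReal_ofReal (gaussianPDFReal_nonneg 0 1 x),
      exp_mul_gaussianPDFReal]
  rw [h]
  exact (integrable_gaussianPDFReal s 1).const_mul _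

lemma integral_exp_gaussian (s : ℝ) :
    ∫ x, Real.exp (s * x) ∂(gaussianReal 0 1) = Real.exp (s ^ 2 / 2) := by
  have hnn : 0 ≤ᵐ[gaussianReal 0 1] fun x => Real.exp (s * x) :=
    ae_of_all _ fun x => (Real.exp_pos _).le
  have hm : Measurable fun x : ℝ => Real.exp (s * x) := (measurable_id.const_mul s).exp
  rw [integral_eq_lintegral_of_nonneg_ae hnn hm.aestronglyMeasurable]
  rw [gaussianReal_of_var_ne_zero 0 one_ne_zero,
    lintegral_withDensity_eq_lintegral_mul _ (measurable_gaussianPDF 0 1)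
      hm.ennreal_ofReal]
  have h : (fun x => (gaussianPDF 0 1 * fun a => ENNReal.ofReal (Real.exp (s * a))) x)
      = fun x => ENNReal.ofReal (Real.exp (s ^ 2 / 2)) * ENNReal.ofReal (gaussianPDFReal s 1 x) := by
    ext x
    simp only [Pi.mul_apply, gaussianPDF]
    rw [← ENNReal.ofReal_mul (gaussianPDFReal_nonneg 0 1 x), mul_comm (gaussianPDFReal 0 1 x),
      exp_mul_gaussianPDFReal, ENNReal.ofReal_mul (Real.exp_pos _).le]
  rw [h, lintegral_const_mul _ (measurable_gaussianPDFReal s 1).ennreal_ofReal]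
  rw [lintegral_gaussianPDFReal_eq_one s one_ne_zero, mul_one,
    ENNReal.toReal_ofReal (Real.exp_pos _).le]

lemma exp_mul_map_gaussian {Ω : Type} {mΩ : MeasurableSpace Ω} {μ : Measure Ω} {X : Ω → ℝ}
    (hXm : Measurable X) (hX : Measure.map X μ = gaussianReal 0 1) (s : ℝ) :
    Integrable (fun ω => Real.exp (s * X ω)) μ ∧
      ∫ ω, Real.exp (s * X ω) ∂μ = Real.exp (s ^ 2 / 2) := by
  have hmg : AEStronglyMeasurable (fun x => Real.exp (s * x)) (Measure.map X μ) :=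
    ((measurable_id.const_mul s).exp).aestronglyMeasurable
  have h2 : Integrable (fun x => Real.exp (s * x)) (Measure.map X μ) := by
    rw [hX]; exact integrable_exp_gaussian s
  constructor
  · exact (integrable_map_measure hmg hXm.aemeasurable).mp h2
  · rw [← integral_map hXm.aemeasurable hmg, hX, integral_exp_gaussian]

lemma abs_rpow_le_exp (p w : ℝ) (hp : 1 ≤ p) :
    |w| ^ p ≤ 1 + (Real.exp (p * w) + Real.exp (-p * w)) := by
  have h1 := Real.exp_pos (p * w)
  have h2 := Real.exp_pos (-p * w)
  rcases le_or_gt |w| 1 with h | h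
  · have : |w| ^ p ≤ 1 := Real.rpow_le_one (abs_nonneg w) h (by linarith)
    linarith
  · have hw : 0 < |w| := by linarith
    have hd : |w| ^ p = Real.exp (Real.log |w| * p) := Real.rpow_def_of_pos hw p
    have hlog : Real.log |w| ≤ |w| := (Real.log_le_sub_one_of_pos hw).trans (by linarith)
    have hle : |w| ^ p ≤ Real.exp (|w| * p) := by
      rw [hd]
      exact Real.exp_le_exp.mpr (mul_le_mul_of_nonneg_right hlog (by linarith))
    have h3 : Real.exp (|w| * p) = Real.exp (p * w) ∨ Real.exp (|w| * p) = Real.exp (-p * w) := by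
      rcases abs_cases w with ⟨he, _⟩ | ⟨he, _⟩
      · left; rw [he, mul_comm]
      · right; rw [he]; ring_nf
    rcases h3 with h3 | h3 <;> rw [h3] at hle <;> linarith

def pairSet (j : ℕ) (Z : ℕ → ℕ) : Finset (ℕ × ℕ) :=
  (Finset.range (j + 1)).biUnion fun l => (Finset.range (Z l)).image fun k => (l, k)

lemma sum_pairSet {M : Type*} [AddCommMonoid M] (j : ℕ) (Z : ℕ → ℕ) (f : ℕ × ℕ → M) :
    ∑ i ∈ pairSet j Z, f i
      = ∑ l ∈ Finset.range (j + 1), ∑ k ∈ Finset.range (Z l), f (l, k) := by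
  classical
  rw [pairSet, Finset.sum_biUnion]
  · exact Finset.sum_congr rfl fun l _ => Finset.sum_image (by simp)
  · intro a _ b _ hab
    refine Finset.disjoint_left.mpr ?_
    rintro ⟨l, k⟩ hx hy
    simp only [Finset.mem_image, Finset.mem_range] at hx hy
    obtain ⟨k1, _, h1⟩ := hx
    obtain ⟨k2, _, h2⟩ := hy
    have ha : a = l := (Prod.ext_iff.mp h1).1
    have hb : b = l := (Prod.ext_iff.mp h2).1
    exact hab (ha.trans hb.symm)

lemma core_bound (p : ℝ) (hp : 2 ≤ p) {Ω : Type} {mΩ : MeasurableSpace Ω} {μ : Measure Ω}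
    [IsProbabilityMeasure μ] {G : ℕ × ℕ → Ω → ℝ} (hGm : ∀ i, Measurable (G i))
    (hGi : iIndepFun G μ)
    (hGd : ∀ i, Measure.map (G i) μ = gaussianReal 0 1)
    (S : Finset (ℕ × ℕ)) (d : ℕ × ℕ → ℝ) (hd : ∑ i ∈ S, d i ^ 2 ≤ 1) :
    ∫⁻ ω, ENNReal.ofReal (|∑ i ∈ S, d i * G i ω| ^ p) ∂μ
      ≤ ENNReal.ofReal (1 + 2 * Real.exp (p ^ 2 / 2)) := by
  classical
  set X : ℕ × ℕ → Ω → ℝ := fun i ω => d i * G i ω with hXdef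
  have hXm : ∀ i, Measurable (X i) := fun i => (hGm i).const_mul _
  have hXi : iIndepFun X μ :=
    hGi.comp (fun i x => d i * x) fun i => measurable_id.const_mul _
  have hXint : ∀ (t : ℝ) (i : ℕ × ℕ), Integrable (fun ω => Real.exp (t * X i ω)) μ := by
    intro t i
    have := (exp_mul_map_gaussian (hGm i) (hGd i) (t * d i)).1
    simp_rw [hXdef, ← mul_assoc]
    exact this
  have hXval : ∀ (t : ℝ) (i : ℕ × ℕ), mgf (X i) μ t = Real.exp ((t * d i) ^ 2 / 2) := by
    intro t i
    have := (exp_mul_map_gaussian (hGm i) (hGd i) (t * d i)).2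
    rw [mgf]
    simp_rw [hXdef, ← mul_assoc]
    exact this
  have hmgf : ∀ t : ℝ, mgf (∑ i ∈ S, X i) μ t ≤ Real.exp (t ^ 2 / 2) := by
    intro t
    rw [hXi.mgf_sum hXm S]
    calc ∏ i ∈ S, mgf (X i) μ t = Real.exp (∑ i ∈ S, (t * d i) ^ 2 / 2) := by
          rw [Real.exp_sum]
          exact Finset.prod_congr rfl fun i _ => hXval t i
      _ ≤ Real.exp (t ^ 2 / 2) := by
          apply Real.exp_le_exp.mpr
          have : ∑ i ∈ S, (t * d i) ^ 2 / 2 = t ^ 2 / 2 * ∑ i ∈ S, d i ^ 2 := by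
            rw [Finset.mul_sum]
            exact Finset.sum_congr rfl fun i _ => by ring
          rw [this]
          nlinarith [sq_nonneg t, Finset.sum_nonneg (fun i (_ : i ∈ S) => sq_nonneg (d i))]
  have hIW : ∀ t : ℝ, Integrable (fun ω => Real.exp (t * (∑ i ∈ S, X i) ω)) μ := fun t =>
    hXi.integrable_exp_mul_sum hXm fun i _ => hXint t i
  have hWeq : ∀ ω, (∑ i ∈ S, d i * G i ω) = (∑ i ∈ S, X i) ω := by
    intro ω; rw [Finset.sum_apply]
  calc ∫⁻ ω, ENNReal.ofReal (|∑ i ∈ S, d i * G i ω| ^ p) ∂μ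
      ≤ ∫⁻ ω, ENNReal.ofReal (1 + (Real.exp (p * (∑ i ∈ S, X i) ω)
          + Real.exp (-p * (∑ i ∈ S, X i) ω))) ∂μ := by
        refine lintegral_mono fun ω => ENNReal.ofReal_le_ofReal ?_
        rw [hWeq ω]
        exact abs_rpow_le_exp p _ (by linarith)
    _ = ENNReal.ofReal (∫ ω, (1 + (Real.exp (p * (∑ i ∈ S, X i) ω)
          + Real.exp (-p * (∑ i ∈ S, X i) ω))) ∂μ) := by
        have hI2 : Integrable (fun ω => Real.exp (p * (∑ i ∈ S, X i) ω)
            + Real.exp (-p * (∑ i ∈ S, X i) ω)) μ := (hIW p).add (hIW (-p))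
        have hIsum : Integrable (fun ω => 1 + (Real.exp (p * (∑ i ∈ S, X i) ω)
            + Real.exp (-p * (∑ i ∈ S, X i) ω))) μ := (integrable_const 1).add hI2
        rw [ofReal_integral_eq_lintegral_ofReal hIsum
          (ae_of_all _ fun ω => by positivity)]
    _ ≤ ENNReal.ofReal (1 + 2 * Real.exp (p ^ 2 / 2)) := by
        apply ENNReal.ofReal_le_ofReal
        have hI2 : Integrable (fun ω => Real.exp (p * (∑ i ∈ S, X i) ω)
            + Real.exp (-p * (∑ i ∈ S, X i) ω)) μ := (hIW p).add (hIW (-p))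
        rw [integral_add (integrable_const 1) hI2,
          integral_add (hIW p) (hIW (-p)), integral_const]
        simp only [probReal_univ, measure_univ, ENNReal.toReal_one, smul_eq_mul, mul_one]
        have h1 : ∫ ω, Real.exp (p * (∑ i ∈ S, X i) ω) ∂μ ≤ Real.exp (p ^ 2 / 2) := hmgf p
        have h2 : ∫ ω, Real.exp (-p * (∑ i ∈ S, X i) ω) ∂μ ≤ Real.exp (p ^ 2 / 2) := by
          have := hmgf (-p)
          rwa [neg_sq] at this
        linarith

end Stmt13Aux

open Stmt13Aux in
/-- `L_p` risk of a Gaussian wavelet projection: for `p ≥ 2` and a wavelet system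
`(ψ_{l,k})_{l ≤ j, k ∈ Z_l}` with `|Z_l| ≤ c 2^l`, satisfying
`∑_{l ≤ j, k} ψ_{l,k}(x)² ≤ C_p² 2^j` for all `x` and
`∫ |ψ_{l,k}|^p ≤ C_p^p 2^{lp(1/2 − 1/p)}`, and independent standard Gaussians
`G_{l,k}`, one has
`E ∫₀¹ |∑_{l ≤ j, k} n^{-1/2} G_{l,k} ψ_{l,k}(x)|^p dx ≤ D_p^p 2^{jp/2} / n^{p/2}`
for a constant `D_p` depending only on `p` (and `C_p`). -/
theorem stmt_13 (p : ℝ) (hp : 2 ≤ p) (Cp : ℝ) (hCp : 0 < Cp) :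
    ∃ D : ℝ, 0 < D ∧
      ∀ (j : ℕ) (c : ℝ) (Z : ℕ → ℕ), (∀ l, (Z l : ℝ) ≤ c * 2 ^ l) →
      ∀ (ψ : ℕ → ℕ → ℝ → ℝ), (∀ l k, Measurable (ψ l k)) →
      (∀ x : ℝ, ∑ l ∈ Finset.range (j + 1), ∑ k ∈ Finset.range (Z l),
          (ψ l k x) ^ 2 ≤ Cp ^ 2 * (2 : ℝ) ^ j) →
      (∀ l k, ∫ x in Set.Icc (0 : ℝ) 1, |ψ l k x| ^ p
          ≤ Cp ^ p * (2 : ℝ) ^ ((l : ℝ) * p * (1 / 2 - 1 / p))) →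
      ∀ (n : ℝ), 0 < n →
      ∀ (Ω : Type) (mΩ : MeasurableSpace Ω) (μ : Measure Ω), IsProbabilityMeasure μ →
      ∀ (G : ℕ × ℕ → Ω → ℝ), (∀ i, Measurable (G i)) →
      iIndepFun G μ →
      (∀ i, Measure.map (G i) μ = gaussianReal 0 1) →
      (∫ ω, (∫ x in Set.Icc (0 : ℝ) 1,
            |∑ l ∈ Finset.range (j + 1), ∑ k ∈ Finset.range (Z l),
              (G (l, k) ω / Real.sqrt n) * ψ l k x| ^ p) ∂μ)
        ≤ D ^ p * (2 : ℝ) ^ ((j : ℝ) * p / 2) / n ^ (p / 2) := by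
  classical
  have hexp := Real.exp_pos (p ^ 2 / 2)
  set Mp : ℝ := 1 + 2 * Real.exp (p ^ 2 / 2) with hMpdef
  have hMp1 : 1 ≤ Mp := by rw [hMpdef]; nlinarith
  have hMp0 : 0 < Mp := by linarith
  refine ⟨Cp * Mp, by positivity, ?_⟩
  intro j c Z hZ ψ hψm hψsq hψint n hn Ω mΩ μ hμ G hGm hGi hGd
  have hp0 : (0 : ℝ) < p := by linarith
  set V : ℝ := Cp ^ 2 * 2 ^ j / n with hVdef
  have hVpos : 0 < V := by positivity
  have hsn : Real.sqrt n ≠ 0 := by positivity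
  have hsV : Real.sqrt V ≠ 0 := by positivity
  set S : Finset (ℕ × ℕ) := pairSet j Z with hSdef
  set F : Ω → ℝ → ℝ := fun ω x => |∑ l ∈ Finset.range (j + 1), ∑ k ∈ Finset.range (Z l),
      (G (l, k) ω / Real.sqrt n) * ψ l k x| ^ p with hFdef
  have hFmeas : Measurable (Function.uncurry F) := by
    apply (Real.continuous_rpow_const hp0.le).measurable.comp
    apply Measurable.abs
    apply Finset.measurable_sum
    intro l _
    apply Finset.measurable_sum
    intro k _
    exact (((hGm (l, k)).comp measurable_fst).div_const _).mul ((hψm l k).comp measurable_snd)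
  have hFnn : ∀ ω x, 0 ≤ F ω x := fun ω x => Real.rpow_nonneg (abs_nonneg _) _
  -- key pointwise-in-x bound
  have keyx : ∀ x : ℝ, ∫⁻ ω, ENNReal.ofReal (F ω x) ∂μ ≤ ENNReal.ofReal (V ^ (p / 2) * Mp) := by
    intro x
    set d : ℕ × ℕ → ℝ := fun i => ψ i.1 i.2 x / (Real.sqrt n * Real.sqrt V) with hddef
    have hterm : ∀ l k (ω : Ω), (G (l, k) ω / Real.sqrt n) * ψ l k x
        = Real.sqrt V * (d (l, k) * G (l, k) ω) := by
      intro l k ω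
      rw [hddef]
      field_simp
    have hsum : ∀ ω : Ω, (∑ l ∈ Finset.range (j + 1), ∑ k ∈ Finset.range (Z l),
        (G (l, k) ω / Real.sqrt n) * ψ l k x) = Real.sqrt V * ∑ i ∈ S, d i * G i ω := by
      intro ω
      rw [hSdef, Finset.mul_sum, sum_pairSet j Z (fun i => Real.sqrt V * (d i * G i ω))]
      exact Finset.sum_congr rfl fun l _ => Finset.sum_congr rfl fun k _ => hterm l k ω
    have hd2 : ∑ i ∈ S, d i ^ 2 ≤ 1 := by
      have h1 : ∑ i ∈ S, d i ^ 2
          = (∑ l ∈ Finset.range (j + 1), ∑ k ∈ Finset.range (Z l), ψ l k x ^ 2) / (n * V) := by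
        rw [hSdef, sum_pairSet j Z (fun i => d i ^ 2), Finset.sum_div]
        refine Finset.sum_congr rfl fun l _ => ?_
        rw [Finset.sum_div]
        refine Finset.sum_congr rfl fun k _ => ?_
        rw [hddef]
        rw [div_pow, mul_pow, Real.sq_sqrt hn.le, Real.sq_sqrt hVpos.le]
      rw [h1, div_le_one (by positivity)]
      calc ∑ l ∈ Finset.range (j + 1), ∑ k ∈ Finset.range (Z l), ψ l k x ^ 2
          ≤ Cp ^ 2 * 2 ^ j := hψsq x
        _ = n * V := by rw [hVdef]; field_simp
    have hWm : Measurable fun ω => ENNReal.ofReal (|∑ i ∈ S, d i * G i ω| ^ p) := by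
      apply Measurable.ennreal_ofReal
      apply (Real.continuous_rpow_const hp0.le).measurable.comp
      exact (Finset.measurable_sum S fun i _ => (hGm i).const_mul _).abs
    have hrw : ∀ ω : Ω, F ω x = V ^ (p / 2) * |∑ i ∈ S, d i * G i ω| ^ p := by
      intro ω
      rw [hFdef]
      simp only
      rw [hsum ω, abs_mul, Real.mul_rpow (abs_nonneg _) (abs_nonneg _),
        abs_of_nonneg (Real.sqrt_nonneg V), Real.sqrt_eq_rpow,
        ← Real.rpow_mul hVpos.le, one_div_mul_eq_div]
    calc ∫⁻ ω, ENNReal.ofReal (F ω x) ∂μ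
        = ∫⁻ ω, ENNReal.ofReal (V ^ (p / 2))
            * ENNReal.ofReal (|∑ i ∈ S, d i * G i ω| ^ p) ∂μ := by
          refine lintegral_congr fun ω => ?_
          rw [hrw ω, ENNReal.ofReal_mul (Real.rpow_nonneg hVpos.le _)]
      _ = ENNReal.ofReal (V ^ (p / 2))
            * ∫⁻ ω, ENNReal.ofReal (|∑ i ∈ S, d i * G i ω| ^ p) ∂μ := by
          rw [lintegral_const_mul _ hWm]
      _ ≤ ENNReal.ofReal (V ^ (p / 2)) * ENNReal.ofReal Mp := by
          gcongr
          exact core_bound p hp hGm hGi hGd S d hd2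
      _ = ENNReal.ofReal (V ^ (p / 2) * Mp) := by
          rw [ENNReal.ofReal_mul (Real.rpow_nonneg hVpos.le _)]
  -- measurability of the inner integral
  have hg_meas : StronglyMeasurable fun ω => ∫ x in Set.Icc (0 : ℝ) 1, F ω x :=
    hFmeas.stronglyMeasurable.integral_prod_right
  have h0 : ∀ ω, 0 ≤ ∫ x in Set.Icc (0 : ℝ) 1, F ω x :=
    fun ω => integral_nonneg fun x => hFnn ω x
  have harith : V ^ (p / 2) = Cp ^ p * (2 : ℝ) ^ ((j : ℝ) * p / 2) / n ^ (p / 2) := by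
    rw [hVdef, Real.div_rpow (by positivity) hn.le,
      Real.mul_rpow (by positivity) (by positivity)]
    congr 1
    · congr 1
      · rw [← Real.rpow_natCast Cp 2, ← Real.rpow_mul hCp.le]
        congr 1
        push_cast
        ring
      · rw [← Real.rpow_natCast (2 : ℝ) j, ← Real.rpow_mul (by norm_num : (0:ℝ) ≤ 2)]
        congr 1
        ring
  have hDp : V ^ (p / 2) * Mp ≤ (Cp * Mp) ^ p * (2 : ℝ) ^ ((j : ℝ) * p / 2) / n ^ (p / 2) := by
    rw [harith, Real.mul_rpow hCp.le hMp0.le]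
    have hMle : Mp ≤ Mp ^ p := by
      calc Mp = Mp ^ (1 : ℝ) := (Real.rpow_one Mp).symm
        _ ≤ Mp ^ p := Real.rpow_le_rpow_of_exponent_le hMp1 (by linarith)
    calc Cp ^ p * (2 : ℝ) ^ ((j : ℝ) * p / 2) / n ^ (p / 2) * Mp
        = Cp ^ p * Mp * ((2 : ℝ) ^ ((j : ℝ) * p / 2) / n ^ (p / 2)) := by ring
      _ ≤ Cp ^ p * Mp ^ p * ((2 : ℝ) ^ ((j : ℝ) * p / 2) / n ^ (p / 2)) :=
          mul_le_mul_of_nonneg_right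
            (mul_le_mul_of_nonneg_left hMle (by positivity)) (by positivity)
      _ = Cp ^ p * Mp ^ p * (2 : ℝ) ^ ((j : ℝ) * p / 2) / n ^ (p / 2) := by ring
  show (∫ ω, (∫ x in Set.Icc (0 : ℝ) 1, F ω x) ∂μ)
      ≤ (Cp * Mp) ^ p * (2 : ℝ) ^ ((j : ℝ) * p / 2) / n ^ (p / 2)
  calc ∫ ω, (∫ x in Set.Icc (0 : ℝ) 1, F ω x) ∂μ
      = (∫⁻ ω, ENNReal.ofReal (∫ x in Set.Icc (0 : ℝ) 1, F ω x) ∂μ).toReal :=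
        integral_eq_lintegral_of_nonneg_ae (ae_of_all _ h0) hg_meas.aestronglyMeasurable
    _ ≤ (ENNReal.ofReal (V ^ (p / 2) * Mp)).toReal := by
        apply ENNReal.toReal_mono ENNReal.ofReal_ne_top
        calc ∫⁻ ω, ENNReal.ofReal (∫ x in Set.Icc (0 : ℝ) 1, F ω x) ∂μ
            ≤ ∫⁻ ω, (∫⁻ x in Set.Icc (0 : ℝ) 1, ENNReal.ofReal (F ω x)) ∂μ := by
              refine lintegral_mono fun ω => ?_
              rw [integral_eq_lintegral_of_nonneg_ae (ae_of_all _ (hFnn ω))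
                (hFmeas.of_uncurry_left).aestronglyMeasurable]
              exact ENNReal.ofReal_toReal_le
          _ = ∫⁻ x in Set.Icc (0 : ℝ) 1, (∫⁻ ω, ENNReal.ofReal (F ω x) ∂μ) := by
              exact lintegral_lintegral_swap (hFmeas.ennreal_ofReal).aemeasurable
          _ ≤ ∫⁻ _x in Set.Icc (0 : ℝ) 1, ENNReal.ofReal (V ^ (p / 2) * Mp) := by
              exact lintegral_mono fun x => keyx x
          _ = ENNReal.ofReal (V ^ (p / 2) * Mp) := by
              rw [setLIntegral_const, Real.volume_Icc]
              norm_num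
    _ ≤ (Cp * Mp) ^ p * (2 : ℝ) ^ ((j : ℝ) * p / 2) / n ^ (p / 2) := by
        rw [ENNReal.toReal_ofReal (by positivity)]
        exact hDp
end
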